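/- (Rank bound for the LLD solution.) Let X be a real n×p matrix and γ > 0, and suppose (P⋆, C⋆) is an optimal point of the low-leverage decomposition (LLD) program for X with parameter γ. Then rank(P⋆) ≤ n γ². -/

import Mathlib

open Matrix
open scoped BigOperators

/-- The Euclidean (ℓ2) norm of a vector. -/
noncomputable def l2norm {p : ℕ} (u : Fin p → ℝ) : ℝ := Real.sqrt (∑ j, u j ^ 2)

/-- The trace inner product ⟨A, B⟩ = trace(Aᵀ B) on real matrices. -/
def tinner {n p : ℕ} (A B : Matrix (Fin n) (Fin p) ℝ) : ℝ := ∑ i, ∑ j, A i j * B i j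

/-- The spectral norm (ℓ2 → ℓ2 operator norm) of a matrix. -/
noncomputable def norm2to2 {n p : ℕ} (Q : Matrix (Fin n) (Fin p) ℝ) : ℝ :=
  sSup {t : ℝ | ∃ u : Fin p → ℝ, l2norm u ≤ 1 ∧ t = l2norm (Q.mulVec u)}

/-- The nuclear norm, defined as the dual of the spectral norm with respect to
the trace inner product. -/
noncomputable def nuclearNorm {n p : ℕ} (P : Matrix (Fin n) (Fin p) ℝ) : ℝ :=
  sSup {t : ℝ | ∃ A : Matrix (Fin n) (Fin p) ℝ, norm2to2 A ≤ 1 ∧ t = tinner P A}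

/-- The row-sum norm ‖C‖_{2,1}: the sum of the Euclidean norms of the rows. -/
noncomputable def rowSumNorm {n p : ℕ} (C : Matrix (Fin n) (Fin p) ℝ) : ℝ :=
  ∑ i, l2norm (C i)



lemma l2norm_nonneg {p : ℕ} (u : Fin p → ℝ) : 0 ≤ l2norm u := Real.sqrt_nonneg _

lemma sq_l2norm {p : ℕ} (u : Fin p → ℝ) : l2norm u ^ 2 = ∑ j, u j ^ 2 :=
  Real.sq_sqrt (Finset.sum_nonneg fun j _ => sq_nonneg _)

lemma l2norm_le_of_sq_le {p : ℕ} {u : Fin p → ℝ} {M : ℝ} (hM : 0 ≤ M)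
    (h : ∑ j, u j ^ 2 ≤ M ^ 2) : l2norm u ≤ M := by
  rw [l2norm, show M = Real.sqrt (M ^ 2) by rw [Real.sqrt_sq hM]]
  exact Real.sqrt_le_sqrt h

lemma dotProduct_le_l2norm {p : ℕ} (u w : Fin p → ℝ) :
    u ⬝ᵥ w ≤ l2norm u * l2norm w := by
  have h := Finset.sum_mul_sq_le_sq_mul_sq Finset.univ u w
  have h1 : u ⬝ᵥ w ≤ Real.sqrt ((∑ j, u j ^ 2) * (∑ j, w j ^ 2)) := by
    calc u ⬝ᵥ w ≤ |∑ j, u j * w j| := le_abs_self _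
    _ = Real.sqrt ((∑ j, u j * w j) ^ 2) := (Real.sqrt_sq_eq_abs _).symm
    _ ≤ _ := Real.sqrt_le_sqrt h
  rwa [Real.sqrt_mul (Finset.sum_nonneg fun j _ => sq_nonneg _)] at h1

lemma l2norm_add_le {p : ℕ} (u w : Fin p → ℝ) :
    l2norm (fun j => u j + w j) ≤ l2norm u + l2norm w := by
  apply l2norm_le_of_sq_le (by have := l2norm_nonneg u; have := l2norm_nonneg w; linarith)
  have h := dotProduct_le_l2norm u w
  have hu := sq_l2norm u
  have hw := sq_l2norm w
  have : ∑ j, (u j + w j) ^ 2 = (∑ j, u j ^ 2) + 2 * (u ⬝ᵥ w) + ∑ j, w j ^ 2 := by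
    simp only [dotProduct, Finset.mul_sum, ← Finset.sum_add_distrib]
    congr 1; ext j; ring
  nlinarith [l2norm_nonneg u, l2norm_nonneg w]

lemma abs_le_l2norm {p : ℕ} (u : Fin p → ℝ) (j : Fin p) : |u j| ≤ l2norm u := by
  rw [← Real.sqrt_sq_eq_abs]
  exact Real.sqrt_le_sqrt (Finset.single_le_sum (f := fun j => u j ^ 2)
    (fun i _ => sq_nonneg _) (Finset.mem_univ j))

lemma l2norm_single {p : ℕ} (j : Fin p) : l2norm (Pi.single (M := fun _ => ℝ) j 1) = 1 := by
  rw [l2norm]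
  have : ∑ j', (Pi.single (M := fun _ => ℝ) j 1) j' ^ 2 = 1 := by
    rw [Finset.sum_eq_single j]
    · simp
    · intro b _ hb; simp [Pi.single_apply, hb]
    · intro h; exact absurd (Finset.mem_univ j) h
  rw [this, Real.sqrt_one]

lemma mulVec_l2norm_le_frob {n p : ℕ} (Q : Matrix (Fin n) (Fin p) ℝ) (u : Fin p → ℝ)
    (hu : l2norm u ≤ 1) :
    l2norm (Q.mulVec u) ≤ Real.sqrt (∑ i, ∑ j, Q i j ^ 2) := by
  apply l2norm_le_of_sq_le (Real.sqrt_nonneg _)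
  rw [Real.sq_sqrt (by positivity : (0:ℝ) ≤ ∑ i, ∑ j, Q i j ^ 2)]
  apply Finset.sum_le_sum
  intro i _
  have h := Finset.sum_mul_sq_le_sq_mul_sq Finset.univ (Q i) u
  have hu2 : ∑ j, u j ^ 2 ≤ 1 := by
    have := sq_l2norm u
    nlinarith [l2norm_nonneg u]
  have h2 : (∑ j, Q i j * u j) ^ 2 ≤ (∑ j, Q i j ^ 2) := by
    calc (∑ j, Q i j * u j) ^ 2 ≤ (∑ j, Q i j ^ 2) * (∑ j, u j ^ 2) := h
    _ ≤ (∑ j, Q i j ^ 2) * 1 := by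
        apply mul_le_mul_of_nonneg_left hu2 (Finset.sum_nonneg fun j _ => sq_nonneg _)
    _ = _ := mul_one _
  simpa [Matrix.mulVec, dotProduct] using h2

lemma bddAbove_norm2to2_set {n p : ℕ} (Q : Matrix (Fin n) (Fin p) ℝ) :
    BddAbove {t : ℝ | ∃ u : Fin p → ℝ, l2norm u ≤ 1 ∧ t = l2norm (Q.mulVec u)} := by
  refine ⟨Real.sqrt (∑ i, ∑ j, Q i j ^ 2), ?_⟩
  rintro t ⟨u, hu, rfl⟩
  exact mulVec_l2norm_le_frob Q u hu

lemma l2norm_mulVec_le_one {n p : ℕ} {Q : Matrix (Fin n) (Fin p) ℝ} (hQ : norm2to2 Q ≤ 1)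
    {u : Fin p → ℝ} (hu : l2norm u ≤ 1) : l2norm (Q.mulVec u) ≤ 1 := by
  refine le_trans ?_ hQ
  exact le_csSup (bddAbove_norm2to2_set Q) ⟨u, hu, rfl⟩

lemma norm2to2_le_one {n p : ℕ} {Q : Matrix (Fin n) (Fin p) ℝ}
    (h : ∀ u : Fin p → ℝ, l2norm u ≤ 1 → l2norm (Q.mulVec u) ≤ 1) : norm2to2 Q ≤ 1 := by
  apply Real.sSup_le _ zero_le_one
  rintro t ⟨u, hu, rfl⟩
  exact h u hu

lemma abs_entry_le_one {n p : ℕ} {A : Matrix (Fin n) (Fin p) ℝ} (hA : norm2to2 A ≤ 1)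
    (i : Fin n) (j : Fin p) : |A i j| ≤ 1 := by
  have h := l2norm_mulVec_le_one hA (le_of_eq (l2norm_single j))
  have h2 : A.mulVec (Pi.single j 1) i = A i j := by
    simp [Matrix.mulVec_single]
  calc |A i j| = |(A.mulVec (Pi.single j 1)) i| := by rw [h2]
  _ ≤ l2norm (A.mulVec (Pi.single j 1)) := abs_le_l2norm _ i
  _ ≤ 1 := h

lemma tinner_le_nuclearNorm {n p : ℕ} (P : Matrix (Fin n) (Fin p) ℝ)
    {A : Matrix (Fin n) (Fin p) ℝ} (hA : norm2to2 A ≤ 1) : tinner P A ≤ nuclearNorm P := by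
  apply le_csSup (s := {t : ℝ | ∃ A : Matrix (Fin n) (Fin p) ℝ, norm2to2 A ≤ 1 ∧ t = tinner P A}) _ ⟨A, hA, rfl⟩
  refine ⟨∑ i, ∑ j, |P i j|, ?_⟩
  rintro t ⟨B, hB, rfl⟩
  unfold tinner
  apply Finset.sum_le_sum; intro i _
  apply Finset.sum_le_sum; intro j _
  calc P i j * B i j ≤ |P i j * B i j| := le_abs_self _
  _ = |P i j| * |B i j| := abs_mul _ _
  _ ≤ |P i j| * 1 := mul_le_mul_of_nonneg_left (abs_entry_le_one hB i j) (abs_nonneg _)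
  _ = |P i j| := mul_one _

lemma nuclearNorm_le {n p : ℕ} {P : Matrix (Fin n) (Fin p) ℝ} {M : ℝ} (hM : 0 ≤ M)
    (h : ∀ A : Matrix (Fin n) (Fin p) ℝ, norm2to2 A ≤ 1 → tinner P A ≤ M) :
    nuclearNorm P ≤ M := by
  apply Real.sSup_le _ hM
  rintro t ⟨A, hA, rfl⟩
  exact h A hA


/-- Orthonormal expansion: dot product of two expansions. -/
lemma sum_dot_sum {m : ℕ} {ι : Type*} [DecidableEq ι] (S : Finset ι) (f : ι → Fin m → ℝ)
    (horth : ∀ k ∈ S, ∀ l ∈ S, f k ⬝ᵥ f l = if k = l then 1 else 0)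
    (c e : ι → ℝ) :
    (∑ i, (∑ k ∈ S, c k * f k i) * (∑ l ∈ S, e l * f l i)) = ∑ k ∈ S, c k * e k := by
  have h1 : ∀ i, (∑ k ∈ S, c k * f k i) * (∑ l ∈ S, e l * f l i)
      = ∑ k ∈ S, ∑ l ∈ S, c k * e l * (f k i * f l i) := by
    intro i
    rw [Finset.sum_mul_sum]
    apply Finset.sum_congr rfl; intro k _
    apply Finset.sum_congr rfl; intro l _
    ring
  simp_rw [h1]
  rw [Finset.sum_comm]
  have h2 : ∀ k ∈ S, ∑ i, ∑ l ∈ S, c k * e l * (f k i * f l i) = c k * e k := by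
    intro k hk
    rw [Finset.sum_comm]
    have h3 : ∀ l ∈ S, ∑ i, c k * e l * (f k i * f l i) = c k * e l * (if k = l then 1 else 0) := by
      intro l hl
      rw [← horth k hk l hl]
      rw [dotProduct, Finset.mul_sum]
    rw [Finset.sum_congr rfl h3]
    have h4 : ∀ l ∈ S, c k * e l * (if k = l then 1 else 0)
        = if l = k then c k * e l else 0 := by
      intro l _
      by_cases h : k = l
      · subst h; simp
      · simp [h, Ne.symm h]
    rw [Finset.sum_congr rfl h4, Finset.sum_ite_eq' S k (fun l => c k * e l), if_pos hk]
  exact Finset.sum_congr rfl h2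

lemma tinner_rankOne_sum {n p : ℕ} {ι : Type*} (S : Finset ι) (m : ι → Fin n → ℝ)
    (v : ι → Fin p → ℝ) (A : Matrix (Fin n) (Fin p) ℝ) :
    tinner (Matrix.of fun i j => ∑ k ∈ S, m k i * v k j) A
      = ∑ k ∈ S, m k ⬝ᵥ (A.mulVec (v k)) := by
  unfold tinner
  have h1 : ∀ i, ∑ j, (∑ k ∈ S, m k i * v k j) * A i j
      = ∑ k ∈ S, m k i * (∑ j, A i j * v k j) := by
    intro i
    have e1 : ∀ j, (∑ k ∈ S, m k i * v k j) * A i j = ∑ k ∈ S, m k i * v k j * A i j :=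
      fun j => Finset.sum_mul _ _ _
    rw [Finset.sum_congr rfl (fun j _ => e1 j), Finset.sum_comm]
    apply Finset.sum_congr rfl; intro k _
    rw [Finset.mul_sum]
    apply Finset.sum_congr rfl; intro j _
    ring
  simp only [Matrix.of_apply]
  rw [Finset.sum_congr rfl (fun i _ => h1 i), Finset.sum_comm]
  apply Finset.sum_congr rfl; intro k _
  simp [dotProduct, Matrix.mulVec, Finset.mul_sum]

lemma mulVec_expand {n p : ℕ} {ι : Type*} (S : Finset ι) (a : ι → Fin n → ℝ)
    (v : ι → Fin p → ℝ) (x : Fin p → ℝ) (i : Fin n) :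
    (Matrix.of fun i j => ∑ k ∈ S, a k i * v k j).mulVec x i
      = ∑ k ∈ S, a k i * (v k ⬝ᵥ x) := by
  simp only [Matrix.mulVec, Matrix.of_apply, dotProduct, Finset.sum_mul]
  rw [Finset.sum_comm]
  apply Finset.sum_congr rfl; intro k _
  rw [Finset.mul_sum]
  apply Finset.sum_congr rfl; intro j _
  ring

/-- Parseval for a complete orthonormal family. -/
lemma parseval {p : ℕ} (v : Fin p → Fin p → ℝ)
    (hcompl : ∀ j j', ∑ k, v k j * v k j' = if j = j' then 1 else 0)
    (x : Fin p → ℝ) : ∑ k, (v k ⬝ᵥ x) ^ 2 = ∑ j, x j ^ 2 := by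
  have h1 : ∀ k, (v k ⬝ᵥ x) ^ 2 = ∑ j, ∑ j', (v k j * v k j') * (x j * x j') := by
    intro k
    rw [sq, dotProduct, Finset.sum_mul_sum]
    apply Finset.sum_congr rfl; intro j _
    apply Finset.sum_congr rfl; intro j' _
    ring
  simp_rw [h1]
  rw [Finset.sum_comm]
  have h2 : ∀ j, ∑ k, ∑ j', (v k j * v k j') * (x j * x j') = x j ^ 2 := by
    intro j
    rw [Finset.sum_comm]
    have h3 : ∀ j', ∑ k, (v k j * v k j') * (x j * x j')
        = (if j = j' then 1 else 0) * (x j * x j') := by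
      intro j'
      rw [← hcompl j j', Finset.sum_mul]
    rw [Finset.sum_congr rfl (fun j' _ => h3 j')]
    have h4 : ∀ j', (if j = j' then (1:ℝ) else 0) * (x j * x j')
        = if j' = j then x j * x j' else 0 := by
      intro j'
      by_cases h : j = j'
      · subst h; simp
      · simp [h, Ne.symm h]
    rw [Finset.sum_congr rfl (fun j' _ => h4 j'), Finset.sum_ite_eq' Finset.univ j
      (fun j' => x j * x j'), if_pos (Finset.mem_univ j)]
    ring
  rw [Finset.sum_congr rfl (fun j _ => h2 j)]


set_option maxHeartbeats 3200000 in
theorem lld_rank_bound {n p : ℕ} (X P C : Matrix (Fin n) (Fin p) ℝ)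
    (γ : ℝ) (hγ : 0 < γ) (hPC : P + C = X)
    (hopt : ∀ P' C' : Matrix (Fin n) (Fin p) ℝ, P' + C' = X →
      nuclearNorm P + γ * rowSumNorm C ≤ nuclearNorm P' + γ * rowSumNorm C') :
    (P.rank : ℝ) ≤ n * γ ^ 2 := by
  classical
  -- Spectral decomposition of Pᵀ * P : an orthonormal complete eigensystem
  obtain ⟨v, μ, horth, hcompl, hμ0, heig⟩ :
      ∃ (v : Fin p → Fin p → ℝ) (μ : Fin p → ℝ),
        (∀ k l, v k ⬝ᵥ v l = if k = l then 1 else 0) ∧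
        (∀ j j', ∑ k, v k j * v k j' = if j = j' then 1 else 0) ∧
        (∀ k, 0 ≤ μ k) ∧
        (∀ k, (Pᵀ * P) *ᵥ v k = μ k • v k) := by
    have hG : (Pᵀ * P).IsHermitian := by
      have hT : Pᵀ = Pᴴ := by rw [conjTranspose_eq_transpose_of_trivial]
      rw [hT]; exact isHermitian_conjTranspose_mul_self P
    set Vm : Matrix (Fin p) (Fin p) ℝ := (hG.eigenvectorUnitary : Matrix (Fin p) (Fin p) ℝ)
      with hVm
    refine ⟨fun k j => Vm j k, hG.eigenvalues, ?_, ?_, ?_, ?_⟩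
    · intro k l
      have h1 : star Vm * Vm = 1 := Unitary.coe_star_mul_self hG.eigenvectorUnitary
      have h2 := congrFun (congrFun h1 k) l
      simpa [Matrix.mul_apply, Matrix.star_apply, dotProduct, Matrix.one_apply,
        mul_comm] using h2
    · intro j j'
      have h1 : Vm * star Vm = 1 := Unitary.coe_mul_star_self hG.eigenvectorUnitary
      have h2 := congrFun (congrFun h1 j) j'
      simpa [Matrix.mul_apply, Matrix.star_apply, Matrix.one_apply] using h2
    · intro k
      apply Matrix.PosSemidef.eigenvalues_nonneg _ k
      have hT : Pᵀ = Pᴴ := by rw [conjTranspose_eq_transpose_of_trivial]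
      rw [hT]
      exact posSemidef_conjTranspose_mul_self P
    · intro k
      show (Pᵀ * P) *ᵥ (fun j => Vm j k) = hG.eigenvalues k • (fun j => Vm j k)
      have h := hG.mulVec_eigenvectorBasis k
      have hvk : (fun j => Vm j k) = ⇑(hG.eigenvectorBasis k) := by
        funext j
        exact hG.eigenvectorUnitary_apply j k
      rw [hvk]
      exact h
  -- singular vectors
  set q : Fin p → (Fin n → ℝ) := fun k => P *ᵥ v k with hq
  have hQQ : ∀ k l, q k ⬝ᵥ q l = if k = l then μ k else 0 := by
    intro k l
    have h1 : q k ⬝ᵥ q l = v k ⬝ᵥ ((Pᵀ * P) *ᵥ v l) := by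
      show (P *ᵥ v k) ⬝ᵥ (P *ᵥ v l) = v k ⬝ᵥ ((Pᵀ * P) *ᵥ v l)
      rw [← mulVec_mulVec, dotProduct_mulVec (v k) Pᵀ, vecMul_transpose]
    rw [h1, heig l, dotProduct_smul, horth k l]
    by_cases h : k = l
    · subst h; simp
    · simp [h]
  set S : Finset (Fin p) := Finset.univ.filter (fun k => μ k ≠ 0) with hS
  have hμpos : ∀ k ∈ S, 0 < μ k := fun k hk =>
    lt_of_le_of_ne (hμ0 k) (Ne.symm (Finset.mem_filter.mp hk).2)
  set σ : Fin p → ℝ := fun k => Real.sqrt (μ k) with hσ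
  have hσpos : ∀ k ∈ S, 0 < σ k := fun k hk => Real.sqrt_pos.mpr (hμpos k hk)
  have hσsq : ∀ k, σ k ^ 2 = μ k := fun k => Real.sq_sqrt (hμ0 k)
  set u : Fin p → (Fin n → ℝ) := fun k i => (σ k)⁻¹ * q k i with hu
  have hqz : ∀ k, k ∉ S → q k = 0 := by
    intro k hk
    have hμk : μ k = 0 := by
      by_contra hne
      exact hk (Finset.mem_filter.mpr ⟨Finset.mem_univ k, hne⟩)
    have h := hQQ k k
    rw [if_pos rfl, hμk] at h
    funext i
    have hsum : ∑ i, q k i ^ 2 = 0 := by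
      simpa [dotProduct, sq] using h
    have h0 := (Finset.sum_eq_zero_iff_of_nonneg
      (fun i _ => sq_nonneg (q k i))).mp hsum i (Finset.mem_univ i)
    exact pow_eq_zero_iff (two_ne_zero) |>.mp h0
  have hUU : ∀ k ∈ S, ∀ l ∈ S, u k ⬝ᵥ u l = if k = l then 1 else 0 := by
    intro k hk l hl
    have h1 : u k ⬝ᵥ u l = (σ k)⁻¹ * ((σ l)⁻¹ * (q k ⬝ᵥ q l)) := by
      simp only [hu, dotProduct, Finset.mul_sum]
      apply Finset.sum_congr rfl; intro i _; ring
    rw [h1, hQQ k l]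
    by_cases h : k = l
    · subst h
      rw [if_pos rfl, if_pos rfl, ← hσsq k]
      have := (hσpos k hk).ne'
      field_simp
    · simp [h]
  have hnormu : ∀ k ∈ S, ∑ i, u k i ^ 2 = 1 := by
    intro k hk
    have := hUU k hk k hk
    rw [if_pos rfl] at this
    simpa [dotProduct, sq] using this
  have hqu : ∀ k ∈ S, ∀ i, q k i = σ k * u k i := by
    intro k hk i
    show q k i = σ k * ((σ k)⁻¹ * q k i)
    rw [← mul_assoc, mul_inv_cancel₀ (hσpos k hk).ne', one_mul]
  clear_value u σ q
  -- decomposition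
  have hD : ∀ i j, P i j = ∑ k, q k i * v k j := by
    intro i j
    have h1 : ∀ k, q k i * v k j = ∑ j', P i j' * v k j' * v k j := by
      intro k
      simp only [hq, Matrix.mulVec, dotProduct, Finset.sum_mul]
    rw [Finset.sum_congr rfl (fun k _ => h1 k), Finset.sum_comm]
    have h2 : ∀ j', ∑ k, P i j' * v k j' * v k j = P i j' * (if j' = j then 1 else 0) := by
      intro j'
      rw [← hcompl j' j, Finset.mul_sum]
      apply Finset.sum_congr rfl; intro k _; ring
    rw [Finset.sum_congr rfl (fun j' _ => h2 j')]
    simp only [mul_ite, mul_one, mul_zero]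
    rw [Finset.sum_ite_eq' Finset.univ j (fun j' => P i j'), if_pos (Finset.mem_univ j)]
  have hD' : ∀ i j, P i j = ∑ k ∈ S, (σ k * u k i) * v k j := by
    intro i j
    rw [hD i j, ← Finset.sum_filter_add_sum_filter_not Finset.univ (fun k => μ k ≠ 0)
      (fun k => q k i * v k j)]
    have hz : ∑ k ∈ Finset.univ.filter (fun k => ¬ μ k ≠ 0), q k i * v k j = 0 := by
      apply Finset.sum_eq_zero
      intro k hk
      have : k ∉ S := by
        simp only [hS, Finset.mem_filter] at hk ⊢
        tauto
      rw [hqz k this]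
      simp
    rw [hz, add_zero]
    apply Finset.sum_congr rfl
    intro k hk
    rw [hqu k hk i]
  have hPform : P = Matrix.of (fun i j => ∑ k ∈ S, (fun k i => σ k * u k i) k i * v k j) := by
    ext i j
    exact hD' i j
  -- rank bound
  have hrank : P.rank ≤ S.card := by
    have hfac : P = (Matrix.of fun i (k : ↥S) => σ k.1 * u k.1 i)
        * (Matrix.of fun (k : ↥S) j => v k.1 j) := by
      ext i j
      rw [Matrix.mul_apply, hD' i j, ← Finset.sum_coe_sort S (fun k => (σ k * u k i) * v k j)]
      rfl
    calc P.rank = _ := congrArg Matrix.rank hfac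
    _ ≤ (Matrix.of fun i (k : ↥S) => σ k.1 * u k.1 i).rank := Matrix.rank_mul_le_left _ _
    _ ≤ Fintype.card ↥S := Matrix.rank_le_card_width _
    _ = S.card := Fintype.card_coe S
  -- leverage scores
  set ℓ : Fin n → ℝ := fun i => ∑ k ∈ S, (u k i)^2 with hℓ
  clear_value ℓ
  have hℓ0 : ∀ i, 0 ≤ ℓ i := fun i => by rw [hℓ]; exact Finset.sum_nonneg fun k _ => sq_nonneg _
  have hsumℓ : ∑ i, ℓ i = S.card := by
    rw [hℓ, Finset.sum_comm]
    rw [Finset.sum_congr rfl hnormu]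
    simp
  -- lower bound on nuclear norm
  set trSigma : ℝ := ∑ k ∈ S, σ k with htrSigma
  clear_value trSigma
  have hlower : trSigma ≤ nuclearNorm P := by
    set A0 : Matrix (Fin n) (Fin p) ℝ :=
      Matrix.of (fun i j => ∑ k ∈ S, u k i * v k j) with hA0
    clear_value A0
    have hA0norm : norm2to2 A0 ≤ 1 := by
      apply norm2to2_le_one
      intro x hx
      apply l2norm_le_of_sq_le zero_le_one
      have hAx : ∀ i, A0.mulVec x i = ∑ k ∈ S, (fun k => v k ⬝ᵥ x) k * u k i := by
        intro i
        rw [hA0, mulVec_expand S (fun k i => u k i) v x i]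
        apply Finset.sum_congr rfl; intro k _; ring
      have h1 : ∑ i, (A0.mulVec x) i ^ 2 = ∑ k ∈ S, (v k ⬝ᵥ x) ^ 2 := by
        have hds := sum_dot_sum S u (fun k hk l hl => hUU k hk l hl)
          (fun k => v k ⬝ᵥ x) (fun k => v k ⬝ᵥ x)
        calc ∑ i, (A0.mulVec x) i ^ 2
            = ∑ i, (∑ k ∈ S, (fun k => v k ⬝ᵥ x) k * u k i)
              * (∑ l ∈ S, (fun l => v l ⬝ᵥ x) l * u l i) := by
              apply Finset.sum_congr rfl; intro i _
              rw [hAx i, sq]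
        _ = ∑ k ∈ S, (v k ⬝ᵥ x) * (v k ⬝ᵥ x) := hds
        _ = ∑ k ∈ S, (v k ⬝ᵥ x) ^ 2 := by
              apply Finset.sum_congr rfl; intro k _; rw [sq]
      rw [h1, one_pow]
      have h2 : ∑ k ∈ S, (v k ⬝ᵥ x) ^ 2 ≤ ∑ k, (v k ⬝ᵥ x) ^ 2 :=
        Finset.sum_le_sum_of_subset_of_nonneg (Finset.subset_univ S)
          (fun k _ _ => sq_nonneg _)
      have h3 := parseval v hcompl x
      have hx2 : ∑ j, x j ^ 2 ≤ 1 := by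
        have := sq_l2norm x
        nlinarith [l2norm_nonneg x]
      linarith
    have htin : tinner P A0 = trSigma := by
      have hstep1 : tinner P A0 = ∑ k ∈ S, (fun i => σ k * u k i) ⬝ᵥ (A0.mulVec (v k)) := by
        rw [hPform]
        exact tinner_rankOne_sum S (fun k i => σ k * u k i) v A0
      rw [hstep1, htrSigma]
      apply Finset.sum_congr rfl
      intro k hk
      have hAv : ∀ i, A0.mulVec (v k) i = ∑ l ∈ S, (fun l => v l ⬝ᵥ v k) l * u l i := by
        intro i
        rw [hA0, mulVec_expand S (fun l i => u l i) v (v k) i]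
        apply Finset.sum_congr rfl; intro l _; ring
      have : (fun i => σ k * u k i) ⬝ᵥ (A0.mulVec (v k)) = σ k * (u k ⬝ᵥ u k) := by
        rw [dotProduct]
        have e1 : ∀ i, σ k * u k i * A0.mulVec (v k) i
            = σ k * (u k i * A0.mulVec (v k) i) := fun i => by ring
        rw [Finset.sum_congr rfl (fun i _ => e1 i), ← Finset.mul_sum]
        congr 1
        have e2 : ∀ i, A0.mulVec (v k) i = u k i := by
          intro i
          rw [hAv i]
          have e3 : ∀ l ∈ S, (v l ⬝ᵥ v k) * u l i = if l = k then u l i else 0 := by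
            intro l hl
            rw [horth l k]
            by_cases h : l = k
            · simp [h]
            · simp [h]
          rw [Finset.sum_congr rfl e3, Finset.sum_ite_eq' S k (fun l => u l i), if_pos hk]
        apply Finset.sum_congr rfl; intro i _
        rw [e2 i]
      rw [this, hUU k hk k hk, if_pos rfl, mul_one]
    calc trSigma = tinner P A0 := htin.symm
    _ ≤ nuclearNorm P := tinner_le_nuclearNorm P hA0norm
  -- per-row leverage bound
  have hkey : ∀ i₀ : Fin n, ℓ i₀ ≤ γ ^ 2 := by
    intro i₀
    rcases Finset.eq_empty_or_nonempty S with hSe | hSne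
    · rw [hℓ]
      simp only [hSe, Finset.sum_empty]
      positivity
    -- main perturbation argument
    set w : Fin p → ℝ := fun k => u k i₀ with hw
    clear_value w
    set s : ℝ := ∑ k ∈ S, w k ^ 2 / σ k with hs
    clear_value s
    have hs0 : 0 ≤ s := by
      rw [hs]
      exact Finset.sum_nonneg fun k hk => div_nonneg (sq_nonneg _) (hσpos k hk).le
    have hw1 : ∀ k ∈ S, w k ^ 2 ≤ 1 := by
      intro k hk
      rw [hw, ← hnormu k hk]
      exact Finset.single_le_sum (f := fun i => u k i ^ 2) (fun i _ => sq_nonneg _)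
        (Finset.mem_univ i₀)
    obtain ⟨k₀, hk₀S, hk₀eq⟩ := Finset.mem_image.mp ((S.image σ).min'_mem (hSne.image σ))
    set t₀ : ℝ := (S.image σ).min' (hSne.image σ) with ht₀
    clear_value t₀
    have ht₀pos : 0 < t₀ := hk₀eq ▸ hσpos k₀ hk₀S
    have ht₀le : ∀ k ∈ S, t₀ ≤ σ k := fun k hk => ht₀ ▸
      (S.image σ).min'_le (σ k) (Finset.mem_image_of_mem σ hk)
    -- the inequality for each admissible t
    have hstep : ∀ t : ℝ, 0 < t → t ≤ t₀ → ℓ i₀ ≤ t / 2 * s + γ * Real.sqrt (ℓ i₀) := by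
      intro t ht htle
      have htσ : ∀ k ∈ S, t ≤ σ k := fun k hk => le_trans htle (ht₀le k hk)
      set d : Fin p → ℝ := fun j => t * ∑ k ∈ S, w k * v k j with hd
      set E : Matrix (Fin n) (Fin p) ℝ :=
        Matrix.of (fun i j => if i = i₀ then d j else 0) with hE
      set m : Fin p → (Fin n → ℝ) :=
        fun k i => σ k * u k i - (if i = i₀ then t * w k else 0) with hm
      clear_value d E m
      have hP'form : P - E = Matrix.of (fun i j => ∑ k ∈ S, m k i * v k j) := by
        ext i j
        have e1 : ∀ k, m k i * v k j
            = (σ k * u k i) * v k j - (if i = i₀ then t * w k else 0) * v k j := by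
          intro k; simp only [hm]; ring
        simp only [Matrix.sub_apply, Matrix.of_apply]
        rw [Finset.sum_congr rfl (fun k _ => e1 k), Finset.sum_sub_distrib, ← hD' i j]
        congr 1
        by_cases h : i = i₀
        · simp only [hE, Matrix.of_apply, if_pos h, hd, Finset.mul_sum]
          apply Finset.sum_congr rfl; intro k _; ring
        · simp only [hE, Matrix.of_apply, if_neg h]
          simp
      have hsum' : (P - E) + (C + E) = X := by
        rw [← hPC]; abel
      have hopt' := hopt (P - E) (C + E) hsum'
      -- l2 norm of d
      have hl2d : l2norm d = t * Real.sqrt (ℓ i₀) := by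
        have h1 : ∑ j, d j ^ 2 = t ^ 2 * ℓ i₀ := by
          have h2 := sum_dot_sum S v (fun k hk l hl => horth k l) w w
          have h3 : ∀ j, d j ^ 2 = t ^ 2 * ((∑ k ∈ S, w k * v k j) * (∑ l ∈ S, w l * v l j)) := by
            intro j
            simp only [hd]
            ring
          rw [Finset.sum_congr rfl (fun j _ => h3 j), ← Finset.mul_sum, h2]
          congr 1
          rw [hℓ]
          apply Finset.sum_congr rfl; intro k _
          simp only [hw, sq]
        rw [l2norm, h1, Real.sqrt_mul (sq_nonneg t), Real.sqrt_sq ht.le]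
      -- row sum norm bound
      have hrow : rowSumNorm (C + E) ≤ rowSumNorm C + t * Real.sqrt (ℓ i₀) := by
        rw [← hl2d]
        unfold rowSumNorm
        have h1 : ∀ i, l2norm ((C + E) i) ≤ l2norm (C i) + (if i = i₀ then l2norm d else 0) := by
          intro i
          by_cases h : i = i₀
          · subst h
            have he : (C + E) i = fun j => C i j + d j := by
              funext j
              simp [hE, Matrix.add_apply]
            rw [he, if_pos rfl]
            exact l2norm_add_le (C i) d
          · have he : (C + E) i = C i := by
              funext j
              simp [hE, Matrix.add_apply, h]
            rw [he, if_neg h]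
            simp
        calc ∑ i, l2norm ((C + E) i)
            ≤ ∑ i, (l2norm (C i) + (if i = i₀ then l2norm d else 0)) :=
              Finset.sum_le_sum fun i _ => h1 i
        _ = (∑ i, l2norm (C i)) + l2norm d := by
              rw [Finset.sum_add_distrib, Finset.sum_ite_eq' Finset.univ i₀
                (fun _ => l2norm d), if_pos (Finset.mem_univ i₀)]
      -- nuclear norm of P - E
      set R : Fin p → ℝ := fun k => σ k - t * w k ^ 2 + t ^ 2 * w k ^ 2 / (2 * σ k) with hR
      clear_value R
      have hR0 : ∀ k ∈ S, 0 ≤ R k := by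
        intro k hk
        have h1 := htσ k hk
        have h2 := hw1 k hk
        have h3 := hσpos k hk
        have h4 : 0 ≤ t ^ 2 * w k ^ 2 / (2 * σ k) := div_nonneg (by positivity) (by linarith)
        simp only [hR]
        nlinarith [mul_le_mul_of_nonneg_left h2 ht.le]
      have hmsq : ∀ k ∈ S, ∑ i, m k i ^ 2 = σ k ^ 2 - 2 * t * σ k * w k ^ 2 + t ^ 2 * w k ^ 2 := by
        intro k hk
        have h1 : ∀ i, m k i ^ 2 = σ k ^ 2 * u k i ^ 2
            + (if i = i₀ then -2 * σ k * t * w k * u k i₀ + t ^ 2 * w k ^ 2 else 0) := by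
          intro i
          by_cases h : i = i₀
          · subst h
            simp only [hm, hw, eq_self_iff_true, if_true]
            ring
          · simp only [hm, hw, if_neg h]
            ring
        rw [Finset.sum_congr rfl (fun i _ => h1 i), Finset.sum_add_distrib, ← Finset.mul_sum,
          hnormu k hk, Finset.sum_ite_eq' Finset.univ i₀ _, if_pos (Finset.mem_univ i₀)]
        rw [hw]
        ring
      have hmR : ∀ k ∈ S, l2norm (m k) ≤ R k := by
        intro k hk
        have h3 := hσpos k hk
        have hkey2 : R k ^ 2 - (σ k ^ 2 - 2 * t * σ k * w k ^ 2 + t ^ 2 * w k ^ 2)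
            = (t * w k ^ 2 * (2 * σ k - t) / (2 * σ k)) ^ 2 := by
          simp only [hR]
          field_simp
          ring
        have h4 : ∑ i, m k i ^ 2 ≤ R k ^ 2 := by
          rw [hmsq k hk]
          linarith [sq_nonneg (t * w k ^ 2 * (2 * σ k - t) / (2 * σ k)), hkey2]
        exact l2norm_le_of_sq_le (hR0 k hk) h4
      have hnucP' : nuclearNorm (P - E) ≤ ∑ k ∈ S, R k := by
        apply nuclearNorm_le (Finset.sum_nonneg hR0)
        intro A hA
        rw [hP'form, tinner_rankOne_sum S m v A]
        apply Finset.sum_le_sum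
        intro k hk
        have hvk1 : l2norm (v k) ≤ 1 := by
          apply l2norm_le_of_sq_le zero_le_one
          have := horth k k
          rw [if_pos rfl] at this
          rw [one_pow, ← this, dotProduct]
          apply le_of_eq
          apply Finset.sum_congr rfl; intro j _
          rw [sq]
        have hAv := l2norm_mulVec_le_one hA hvk1
        calc m k ⬝ᵥ (A.mulVec (v k)) ≤ l2norm (m k) * l2norm (A.mulVec (v k)) :=
              dotProduct_le_l2norm _ _
        _ ≤ l2norm (m k) * 1 :=
              mul_le_mul_of_nonneg_left hAv (l2norm_nonneg _)
        _ = l2norm (m k) := mul_one _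
        _ ≤ R k := hmR k hk
      have hℓw : ℓ i₀ = ∑ k ∈ S, w k ^ 2 := by simp only [hℓ, hw]
      have hReq : ∑ k ∈ S, R k = trSigma - t * ℓ i₀ + t ^ 2 / 2 * s := by
        have e1 : ∀ k ∈ S, R k = σ k - t * w k ^ 2 + t ^ 2 / 2 * (w k ^ 2 / σ k) := by
          intro k hk
          have h3 := (hσpos k hk).ne'
          simp only [hR]
          field_simp
        rw [Finset.sum_congr rfl e1, Finset.sum_add_distrib, Finset.sum_sub_distrib,
          ← Finset.mul_sum, ← Finset.mul_sum, htrSigma, hs, hℓw]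
      -- combine
      have hfinal : trSigma + γ * rowSumNorm C ≤
          (trSigma - t * ℓ i₀ + t ^ 2 / 2 * s) + γ * (rowSumNorm C + t * Real.sqrt (ℓ i₀)) := by
        calc trSigma + γ * rowSumNorm C ≤ nuclearNorm P + γ * rowSumNorm C := by linarith
        _ ≤ nuclearNorm (P - E) + γ * rowSumNorm (C + E) := hopt'
        _ ≤ (∑ k ∈ S, R k) + γ * (rowSumNorm C + t * Real.sqrt (ℓ i₀)) := by
              have := mul_le_mul_of_nonneg_left hrow hγ.le
              linarith
        _ = _ := by rw [hReq]
      have ht' : t * ℓ i₀ ≤ t ^ 2 / 2 * s + γ * (t * Real.sqrt (ℓ i₀)) := by linarith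
      have ht'' : t * ℓ i₀ ≤ t * (t / 2 * s + γ * Real.sqrt (ℓ i₀)) := by
        calc t * ℓ i₀ ≤ t ^ 2 / 2 * s + γ * (t * Real.sqrt (ℓ i₀)) := ht'
        _ = t * (t / 2 * s + γ * Real.sqrt (ℓ i₀)) := by ring
      exact le_of_mul_le_mul_left ht'' ht
    -- take t → 0
    have hlim : ℓ i₀ ≤ γ * Real.sqrt (ℓ i₀) := by
      apply le_of_forall_pos_le_add
      intro ε hε
      set t := min t₀ (2 * ε / (s + 1)) with htdef
      have ht1 : 0 < t := lt_min ht₀pos (by positivity)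
      have ht2 : t ≤ t₀ := min_le_left _ _
      have h1 := hstep t ht1 ht2
      have h2 : t / 2 * s ≤ ε := by
        have h3 : t ≤ 2 * ε / (s + 1) := min_le_right _ _
        have h4 : t / 2 * s ≤ (2 * ε / (s + 1)) / 2 * s := by
          apply mul_le_mul_of_nonneg_right _ hs0
          linarith
        have h5 : (2 * ε / (s + 1)) / 2 * s = ε * (s / (s + 1)) := by
          field_simp
        have h6 : s / (s + 1) ≤ 1 := by
          rw [div_le_one (by linarith)]
          linarith
        calc t / 2 * s ≤ (2 * ε / (s + 1)) / 2 * s := h4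
        _ = ε * (s / (s + 1)) := h5
        _ ≤ ε * 1 := mul_le_mul_of_nonneg_left h6 hε.le
        _ = ε := mul_one _
      linarith
    have hsq := Real.sq_sqrt (hℓ0 i₀)
    nlinarith [Real.sqrt_nonneg (ℓ i₀), sq_nonneg (Real.sqrt (ℓ i₀) - γ)]
  -- conclude
  have hcard : (S.card : ℝ) ≤ n * γ ^ 2 := by
    rw [← hsumℓ]
    calc ∑ i, ℓ i ≤ ∑ _i : Fin n, γ ^ 2 := Finset.sum_le_sum fun i _ => hkey i
    _ = n * γ ^ 2 := by
      rw [Finset.sum_const, Finset.card_univ, Fintype.card_fin, nsmul_eq_mul]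
  calc (P.rank : ℝ) ≤ (S.card : ℝ) := Nat.cast_le.mpr hrank
  _ ≤ n * γ ^ 2 := hcard
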